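/- arXiv:cond-mat/0307460 — 4 statements merged into one kernel-verified Lean document; each statement's English description precedes it below -/
import Mathlib

section
/- If μ ∈ (0,1) and e₊ − e₋ is not an integer multiple of 2π, then r := |1 − μ + μ e^{i(e₊−e₋)}| < 1, and consequently ‖m⃗_t − m⃗_e‖ ≤ C r^t for some constant C (depending on m⃗_0, m⃗_e, h⃗), so m⃗_t → m⃗_e exponentially fast as t → ∞. -/
open scoped BigOperators
open Matrix Filter
open scoped ComplexOrder

noncomputable section

/-- 2×2 complex matrices: single-site operators. -/
abbrev Mat2 := Matrix (Fin 2) (Fin 2) ℂ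

/-- Operators on the `N`-site Hilbert space `⊗_{j=1}^N ℂ²`, identified with
matrices indexed by configurations `Fin N → Fin 2`. -/
abbrev MatN (N : ℕ) := Matrix (Fin N → Fin 2) (Fin N → Fin 2) ℂ

/-- Pauli matrices. -/
def σx : Mat2 := !![0, 1; 1, 0]
def σy : Mat2 := !![0, -Complex.I; Complex.I, 0]
def σz : Mat2 := !![1, 0; 0, -1]
def pauli : Fin 3 → Mat2 := ![σx, σy, σz]

/-- `m⃗ · σ⃗` for a real vector `m⃗ ∈ ℝ³`. -/
def dotPauli (m : Fin 3 → ℝ) : Mat2 := ∑ i, (m i : ℂ) • pauli i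

/-- Euclidean norm on ℝ³. -/
def norm3 (v : Fin 3 → ℝ) : ℝ := Real.sqrt (∑ i, (v i) ^ 2)

/-- dot product on ℝ³. -/
def dot3 (u v : Fin 3 → ℝ) : ℝ := ∑ i, u i * v i

/-- tensor product `⊗_j B j` of single-site matrices. -/
def tens {N : ℕ} (B : Fin N → Mat2) : MatN N := fun η η' => ∏ j, B j (η j) (η' j)

/-- `B_j = 𝟙 ⊗ ⋯ ⊗ B ⊗ ⋯ ⊗ 𝟙` with `B` at site `j`. -/
def site (N : ℕ) (j : Fin N) (B : Mat2) : MatN N :=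
  tens (Function.update (fun _ => (1 : Mat2)) j B)

/-- `B_N = ∑_j B_j`. -/
def sumSite (N : ℕ) (B : Mat2) : MatN N := ∑ j, site N j B

/-- partial trace onto site `j` (reduced density matrix at site `j`). -/
def ptrace {N : ℕ} (j : Fin N) (ρ : MatN N) : Mat2 :=
  fun a b => ∑ η : Fin N → Fin 2, if η j = a then ρ η (Function.update η j b) else 0

/-- functional calculus `f(M)` for a Hermitian matrix `M` (junk value `0` otherwise). -/
def matFun {n : Type*} [Fintype n] [DecidableEq n] (f : ℝ → ℝ) (M : Matrix n n ℂ) :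
    Matrix n n ℂ :=
  if hM : M.IsHermitian then
    (hM.eigenvectorUnitary : Matrix n n ℂ) *
      Matrix.diagonal (fun i => (f (hM.eigenvalues i) : ℂ)) *
        (hM.eigenvectorUnitary : Matrix n n ℂ)ᴴ
  else 0

/-- `k_j(ε,t) = ∑_{n=1}^t ε_{(j-n) mod N}`. -/
def kSteps (N t : ℕ) (ε : Fin N → Fin 2) (j : Fin N) : ℕ :=
  ∑ n ∈ Finset.Icc 1 t, (ε ⟨((j : ℕ) + n * (N - 1)) % N, Nat.mod_lt _ j.pos⟩ : ℕ)

/-- the unitary dynamics `U_N(t,ε) = ⊗_j U^{k_j(ε,t)}`. -/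
def UN (U : Mat2) (N t : ℕ) (ε : Fin N → Fin 2) : MatN N :=
  tens (fun j => U ^ kSteps N t ε j)

/-- the set `Ω_μ^N` of scatterer configurations with `⌈μN⌉` active scatterers. -/
def OmegaSet (N : ℕ) (μ : ℝ) : Finset (Fin N → Fin 2) :=
  Finset.univ.filter (fun ε => (∑ j, (ε j : ℕ)) = Nat.ceil (μ * N))

/-- expectation `E_μ^N` with respect to the uniform probability on `Ω_μ^N`. -/
def epsAvg (N : ℕ) (μ : ℝ) (g : (Fin N → Fin 2) → ℝ) : ℝ :=
  (∑ ε ∈ OmegaSet N μ, g ε) / (OmegaSet N μ).card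

/-- the single site Hamiltonian `H = h⃗ · σ⃗`. -/
def Hmat (hv : Fin 3 → ℝ) : Mat2 := dotPauli hv

/-- `U = exp(iH)`. -/
def Umat (hv : Fin 3 → ℝ) : Mat2 := NormedSpace.exp (Complex.I • Hmat hv)

/-- `z = 1 - μ + μ e^{i(e₊ - e₋)}` with `e₊ - e₋ = 2h`. -/
def zfac (h μ : ℝ) : ℂ := 1 - μ + μ * Complex.exp (Complex.I * (2 * h))

/-- the magnetization `m⃗_t = m⃗_e + Re[(m⃗_0 - m⃗_e + i(h⃗ × m⃗_0)/h) z^t]`, with `m⃗_e = e h⃗/h²`. -/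
def mVec (hv m0 : Fin 3 → ℝ) (e μ : ℝ) (t : ℕ) (i : Fin 3) : ℝ :=
  e * hv i / (norm3 hv) ^ 2 +
    (((m0 i - e * hv i / (norm3 hv) ^ 2 : ℝ) +
        Complex.I * ((crossProduct hv m0) i / norm3 hv)) *
      (zfac (norm3 hv) μ) ^ t).re

/-- the Heisenberg-picture effective map `Γ(A) = (1-μ)A + μ U* A U`. -/
def Gam (U : Mat2) (μ : ℝ) (A : Mat2) : Mat2 := (1 - μ) • A + μ • (Uᴴ * A * U)

/-- the Schrödinger-picture effective map `Γ*(ν) = (1-μ)ν + μ U ν U*`. -/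
def GamS (U : Mat2) (μ : ℝ) (ν : Mat2) : Mat2 := (1 - μ) • ν + μ • (U * ν * Uᴴ)

/-- the density matrix with Bloch vector `m⃗`: `(𝟙 + m⃗·σ⃗)/2`. -/
def bloch (m : Fin 3 → ℝ) : Mat2 := (2 : ℂ)⁻¹ • (1 + dotPauli m)


/-- If `μ ∈ (0,1)` and `e₊ − e₋ = 2h` is not an integer multiple of `2π`,
then `r = |1 − μ + μ e^{i(e₊−e₋)}| < 1`, and `‖m⃗_t − m⃗_e‖ ≤ C rᵗ` for some constant `C`,
so `m⃗_t → m⃗_e` exponentially fast. -/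
theorem kac_exponential_relaxation
    (hv : Fin 3 → ℝ) (hhv : hv ≠ 0) (μ : ℝ) (hμ : μ ∈ Set.Ioo (0 : ℝ) 1)
    (hres : ∀ k : ℤ, 2 * norm3 hv ≠ k * (2 * Real.pi))
    (m0 : Fin 3 → ℝ) (hm0 : norm3 m0 ≤ 1) (e : ℝ) :
    ‖zfac (norm3 hv) μ‖ < 1 ∧
      ∃ C : ℝ, ∀ t : ℕ,
        norm3 (fun i => mVec hv m0 e μ t i - e * hv i / (norm3 hv) ^ 2) ≤
          C * (‖zfac (norm3 hv) μ‖) ^ t := by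
  obtain ⟨hμ0, hμ1⟩ := hμ
  set h := norm3 hv with hh
  set z := zfac h μ with hz
  -- compute re and im of z
  have hzre : z.re = 1 - μ + μ * Real.cos (2 * h) := by
    simp [hz, zfac, Complex.ext_iff, Complex.exp_re, Complex.exp_im]
  have hzim : z.im = μ * Real.sin (2 * h) := by
    simp [hz, zfac, Complex.ext_iff, Complex.exp_re, Complex.exp_im]
  have hcos : Real.cos (2 * h) < 1 := by
    rcases lt_or_eq_of_le (Real.cos_le_one (2 * h)) with hlt | heq
    · exact hlt
    · exfalso
      obtain ⟨n, hn⟩ := (Real.cos_eq_one_iff _).mp heq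
      exact hres n (by linarith)
  have hsq : ‖z‖ ^ 2 < 1 := by
    rw [Complex.sq_norm, Complex.normSq_apply, hzre, hzim]
    have hs := Real.sin_sq_add_cos_sq (2 * h)
    have hprod : (0:ℝ) < μ * (1 - μ) * (1 - Real.cos (2 * h)) :=
      mul_pos (mul_pos hμ0 (by linarith)) (by linarith)
    have key : (1 - μ + μ * Real.cos (2 * h)) * (1 - μ + μ * Real.cos (2 * h)) +
        μ * Real.sin (2 * h) * (μ * Real.sin (2 * h)) =
        1 - 2 * (μ * (1 - μ) * (1 - Real.cos (2 * h))) +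
          μ ^ 2 * (Real.sin (2 * h) ^ 2 + Real.cos (2 * h) ^ 2 - 1) := by ring
    rw [key, hs]
    linarith
  have hr1 : ‖z‖ < 1 := by
    nlinarith [norm_nonneg z]
  refine ⟨hr1, ?_⟩
  set c : Fin 3 → ℂ := fun i =>
    ((m0 i - e * hv i / h ^ 2 : ℝ) : ℂ) +
      Complex.I * (((crossProduct hv m0) i / h : ℝ) : ℂ) with hc
  refine ⟨Real.sqrt (∑ i, ‖c i‖ ^ 2), fun t => ?_⟩
  have hdiff : ∀ i, mVec hv m0 e μ t i - e * hv i / h ^ 2 = (c i * z ^ t).re := by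
    intro i
    simp only [mVec, hc, ← hh, ← hz]
    push_cast
    ring
  have hterm : ∀ i, (mVec hv m0 e μ t i - e * hv i / h ^ 2) ^ 2 ≤
      ‖c i‖ ^ 2 * (‖z‖ ^ t) ^ 2 := by
    intro i
    rw [hdiff i]
    have h1 : (c i * z ^ t).re ^ 2 ≤ ‖c i * z ^ t‖ ^ 2 := by
      rw [Complex.sq_norm, Complex.normSq_apply]
      nlinarith [sq_nonneg ((c i * z ^ t).im)]
    calc (c i * z ^ t).re ^ 2 ≤ ‖c i * z ^ t‖ ^ 2 := h1
      _ = ‖c i‖ ^ 2 * (‖z‖ ^ t) ^ 2 := by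
          rw [norm_mul, norm_pow]; ring
  have hnn : (0 : ℝ) ≤ ‖z‖ ^ t := pow_nonneg (norm_nonneg z) t
  calc norm3 (fun i => mVec hv m0 e μ t i - e * hv i / h ^ 2)
      ≤ Real.sqrt ((∑ i, ‖c i‖ ^ 2) * (‖z‖ ^ t) ^ 2) := by
        rw [norm3]
        apply Real.sqrt_le_sqrt
        rw [Finset.sum_mul]
        exact Finset.sum_le_sum fun i _ => hterm i
    _ = Real.sqrt (∑ i, ‖c i‖ ^ 2) * ‖z‖ ^ t := by
        rw [Real.sqrt_mul (Finset.sum_nonneg fun i _ => sq_nonneg _),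
          Real.sqrt_sq hnn]

end
end

section
/- Assume ‖m⃗_0‖ ≤ 1. Then for every t ∈ ℕ, ‖m⃗_t‖ ≤ 1, the matrix ν_t := (𝟙 + m⃗_t·σ⃗)/2 is a density matrix whose eigenvalues are (1+‖m⃗_t‖)/2 and (1−‖m⃗_t‖)/2, and its von Neumann entropy S[ν_t] := −Σ_{λ eigenvalue of ν_t} λ log λ (with the convention 0 log 0 := 0) equals s(t) := −((1+‖m⃗_t‖)/2) log((1+‖m⃗_t‖)/2) − ((1−‖m⃗_t‖)/2) log((1−‖m⃗_t‖)/2). -/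
open scoped BigOperators
open Matrix Filter
open scoped ComplexOrder

noncomputable section

/-- von Neumann entropy `S[ν] = −∑_λ λ log λ` (sum over eigenvalues with multiplicity),
with the convention `0 log 0 = 0` (automatic since `Real.log 0 = 0`). -/
def vnEntropy (ν : Mat2) : ℝ :=
  if hν : ν.IsHermitian then -∑ i, hν.eigenvalues i * Real.log (hν.eigenvalues i) else 0

/-- the entropy function `s(x) = −((1+x)/2) log((1+x)/2) − ((1−x)/2) log((1−x)/2)`. -/
def entFun (x : ℝ) : ℝ :=
  -((1 + x) / 2 * Real.log ((1 + x) / 2)) - (1 - x) / 2 * Real.log ((1 - x) / 2)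

lemma norm3_sq (m : Fin 3 → ℝ) : (norm3 m) ^ 2 = m 0 ^ 2 + m 1 ^ 2 + m 2 ^ 2 := by
  rw [norm3, Real.sq_sqrt (by positivity), Fin.sum_univ_three]

lemma bloch_entries (m : Fin 3 → ℝ) :
    bloch m = !![((1 + m 2 : ℝ) : ℂ)/2, ((m 0 : ℝ) - Complex.I * (m 1:ℝ))/2;
                 ((m 0:ℝ) + Complex.I * (m 1:ℝ))/2, ((1 - m 2 : ℝ):ℂ)/2] := by
  ext i j
  fin_cases i <;> fin_cases j <;>
    simp [bloch, dotPauli, pauli, σx, σy, σz, Fin.sum_univ_three, Matrix.one_apply] <;> ring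

lemma bloch_isHermitian (m : Fin 3 → ℝ) : (bloch m).IsHermitian := by
  rw [bloch_entries]
  ext i j
  fin_cases i <;> fin_cases j <;>
    simp [Matrix.conjTranspose_apply, Complex.ext_iff]

lemma bloch_trace (m : Fin 3 → ℝ) : (bloch m).trace = 1 := by
  rw [bloch_entries]
  simp [Matrix.trace_fin_two]
  ring

lemma bloch_spectrum (m : Fin 3 → ℝ) :
    spectrum ℂ (bloch m) =
      {(((1 + norm3 m) / 2 : ℝ) : ℂ), (((1 - norm3 m) / 2 : ℝ) : ℂ)} := by
  ext z
  rw [spectrum.mem_iff, Matrix.isUnit_iff_isUnit_det, isUnit_iff_ne_zero, not_not]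
  have : ((algebraMap ℂ Mat2) z - bloch m).det
      = (z - (((1 + norm3 m) / 2 : ℝ) : ℂ)) * (z - (((1 - norm3 m) / 2 : ℝ) : ℂ)) := by
    rw [bloch_entries]
    rw [Matrix.det_fin_two]
    have hr : ((norm3 m : ℂ)) ^ 2 = (m 0:ℂ) ^ 2 + (m 1:ℂ) ^ 2 + (m 2:ℂ) ^ 2 := by
      exact_mod_cast norm3_sq m
    simp [Matrix.algebraMap_matrix_apply]
    linear_combination (1/4 : ℂ) * hr + Complex.I_sq * ((m 1 : ℂ)^2/4)
  rw [this, mul_eq_zero, sub_eq_zero, sub_eq_zero]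
  simp [Set.mem_insert_iff]

lemma trace_eq_sum_eig {A : Mat2} (hA : A.IsHermitian) :
    A.trace = ((hA.eigenvalues 0 + hA.eigenvalues 1 : ℝ) : ℂ) := by
  conv_lhs => rw [hA.spectral_theorem, Unitary.conjStarAlgAut_apply]
  rw [Matrix.trace_mul_cycle]
  rw [show (star (hA.eigenvectorUnitary : Mat2)) * (hA.eigenvectorUnitary : Mat2) = 1 from
    Unitary.coe_star_mul_self _, one_mul, Matrix.trace_diagonal]
  simp [Fin.sum_univ_two]

lemma bloch_eig_cases (m : Fin 3 → ℝ) :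
    ((bloch_isHermitian m).eigenvalues 0 = (1 + norm3 m) / 2 ∧
      (bloch_isHermitian m).eigenvalues 1 = (1 - norm3 m) / 2) ∨
    ((bloch_isHermitian m).eigenvalues 0 = (1 - norm3 m) / 2 ∧
      (bloch_isHermitian m).eigenvalues 1 = (1 + norm3 m) / 2) := by
  set hB := bloch_isHermitian m
  have hsum : hB.eigenvalues 0 + hB.eigenvalues 1 = 1 := by
    have h1 := trace_eq_sum_eig hB
    rw [bloch_trace m] at h1
    exact_mod_cast h1.symm
  have hmem : ∀ i, hB.eigenvalues i = (1 + norm3 m) / 2 ∨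
      hB.eigenvalues i = (1 - norm3 m) / 2 := by
    intro i
    have h2 : ((hB.eigenvalues i : ℝ) : ℂ) ∈ spectrum ℂ (bloch m) :=
      spectrum.algebraMap_mem ℂ (hB.eigenvalues_mem_spectrum_real i)
    rw [bloch_spectrum m] at h2
    rcases h2 with h | h
    · left; exact_mod_cast h
    · right; exact_mod_cast (Set.mem_singleton_iff.mp h)
  rcases hmem 0 with h0 | h0 <;> rcases hmem 1 with h1 | h1
  · have : norm3 m = 0 := by rw [h0, h1] at hsum; linarith
    left; constructor <;> rw [this] at * <;> linarith
  · exact Or.inl ⟨h0, h1⟩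
  · exact Or.inr ⟨h0, h1⟩
  · have : norm3 m = 0 := by rw [h0, h1] at hsum; linarith
    left; constructor <;> rw [this] at * <;> linarith

lemma bloch_posSemidef (m : Fin 3 → ℝ) (hm : norm3 m ≤ 1) : (bloch m).PosSemidef := by
  apply (bloch_isHermitian m).posSemidef_iff_eigenvalues_nonneg.mpr
  intro i
  have hr : 0 ≤ norm3 m := Real.sqrt_nonneg _
  have := bloch_eig_cases m
  fin_cases i <;> rcases this with ⟨h0, h1⟩ | ⟨h0, h1⟩ <;>
    [skip; skip; skip; skip] <;>
    first
      | (show (0:ℝ) ≤ _root_.id ((bloch_isHermitian m).eigenvalues 0); rw [_root_.id, h0]; linarith)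
      | (show (0:ℝ) ≤ _root_.id ((bloch_isHermitian m).eigenvalues 1); rw [_root_.id, h1]; linarith)

lemma bloch_entropy (m : Fin 3 → ℝ) :
    vnEntropy (bloch m) = entFun (norm3 m) := by
  rw [vnEntropy, dif_pos (bloch_isHermitian m), Fin.sum_univ_two]
  rcases bloch_eig_cases m with ⟨h0, h1⟩ | ⟨h0, h1⟩ <;> rw [h0, h1, entFun] <;> ring

lemma norm3_pos {v : Fin 3 → ℝ} (hv : v ≠ 0) : 0 < norm3 v := by
  have h1 : 0 < ∑ i, v i ^ 2 := by
    rcases Function.ne_iff.mp hv with ⟨i, hi⟩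
    have : 0 < v i ^ 2 := lt_of_le_of_ne (sq_nonneg _) (Ne.symm (pow_ne_zero _ hi))
    exact Finset.sum_pos' (fun j _ => by positivity) ⟨i, Finset.mem_univ i, this⟩
  exact Real.sqrt_pos.mpr h1

lemma zfac_abs_le (h μ : ℝ) (hμ : μ ∈ Set.Icc (0:ℝ) 1) : ‖zfac h μ‖ ≤ 1 := by
  obtain ⟨h0, h1⟩ := hμ
  calc ‖zfac h μ‖ ≤ ‖1 - (μ:ℂ)‖ + ‖(μ:ℂ) * Complex.exp (Complex.I * (2 * h))‖ := by
        exact norm_add_le _ _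
    _ = (1 - μ) + μ * 1 := by
        rw [norm_mul, Complex.norm_exp]
        have h2 : ((1 : ℂ) - μ) = ((1 - μ : ℝ) : ℂ) := by push_cast; ring
        rw [h2, Complex.norm_of_nonneg (by linarith),
          Complex.norm_of_nonneg h0]
        norm_num [Complex.mul_re]
    _ = 1 := by ring

lemma quad3 (u v w : Fin 3 → ℝ) (a b : ℝ)
    (huv : ∑ i, u i * v i = 0) (huw : ∑ i, u i * w i = 0)
    (hvw : ∑ i, v i * w i = 0) (hvv : ∑ i, v i * v i = ∑ i, w i * w i) :
    ∑ i, (u i + (a * v i - b * w i)) ^ 2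
      = ∑ i, u i * u i + (a ^ 2 + b ^ 2) * ∑ i, v i * v i := by
  simp only [Fin.sum_univ_three] at *
  linear_combination 2 * a * huv - 2 * b * huw - 2 * a * b * hvw - b ^ 2 * hvv

set_option maxHeartbeats 1000000 in
lemma mnorm_le (hv : Fin 3 → ℝ) (hhv : hv ≠ 0) (μ : ℝ) (hμ : μ ∈ Set.Icc (0:ℝ) 1)
    (m0 : Fin 3 → ℝ) (hm0 : norm3 m0 ≤ 1) (t : ℕ) :
    norm3 (mVec hv m0 (dot3 hv m0) μ t) ≤ 1 := by
  set h := norm3 hv with hh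
  have hpos : 0 < h := norm3_pos hhv
  have hne : h ≠ 0 := ne_of_gt hpos
  set S : ℝ := hv 0 ^ 2 + hv 1 ^ 2 + hv 2 ^ 2 with hSdef
  have hs2 : h ^ 2 = S := norm3_sq hv
  have hSne : S ≠ 0 := by rw [← hs2]; positivity
  set E : ℝ := hv 0 * m0 0 + hv 1 * m0 1 + hv 2 * m0 2 with hEdef
  have hE : dot3 hv m0 = E := by rw [dot3, Fin.sum_univ_three]
  set z : ℂ := (zfac h μ) ^ t with hz
  set a : ℝ := z.re with ha
  set b : ℝ := z.im with hb
  set me : Fin 3 → ℝ := fun i => E * hv i / S with hme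
  set p : Fin 3 → ℝ := fun i => m0 i - E * hv i / S with hp
  set q : Fin 3 → ℝ := fun i => (crossProduct hv) m0 i / h with hq
  have hcross : (crossProduct hv) m0 =
      ![hv 1 * m0 2 - hv 2 * m0 1, hv 2 * m0 0 - hv 0 * m0 2, hv 0 * m0 1 - hv 1 * m0 0] :=
    cross_apply hv m0
  have hmv : ∀ i, mVec hv m0 (dot3 hv m0) μ t i = me i + (a * p i - b * q i) := by
    intro i
    rw [mVec, hE, ← hh, hs2]
    simp only [hme, hp, hq, ha, hb, ← hh]
    rw [show ((((crossProduct hv) m0 i : ℝ)) : ℂ) / ((h : ℝ) : ℂ)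
        = (((crossProduct hv) m0 i / h : ℝ) : ℂ) by push_cast; ring]
    simp [Complex.mul_re, Complex.add_re, Complex.add_im, Complex.mul_im]
    ring
  have huv : ∑ i, me i * p i = 0 := by
    simp only [hme, hp, Fin.sum_univ_three]
    field_simp
    ring
  have huw : ∑ i, me i * q i = 0 := by
    simp only [hme, hq, hcross, Fin.sum_univ_three]
    simp only [Matrix.cons_val_zero, Matrix.cons_val_one, Matrix.head_cons,
      Matrix.cons_val_two, Matrix.tail_cons]
    field_simp
    ring
  have hvw : ∑ i, p i * q i = 0 := by
    simp only [hp, hq, hcross, Fin.sum_univ_three]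
    simp only [Matrix.cons_val_zero, Matrix.cons_val_one, Matrix.head_cons,
      Matrix.cons_val_two, Matrix.tail_cons]
    field_simp
    ring
  have hq2 : ∑ i, q i * q i = (S * (m0 0 ^ 2 + m0 1 ^ 2 + m0 2 ^ 2) - E ^ 2) / S := by
    simp only [hq, hcross, Fin.sum_univ_three]
    simp only [Matrix.cons_val_zero, Matrix.cons_val_one, Matrix.head_cons,
      Matrix.cons_val_two, Matrix.tail_cons]
    rw [eq_div_iff hSne]
    field_simp
    linear_combination (-(S * (m0 0 ^ 2 + m0 1 ^ 2 + m0 2 ^ 2) - E ^ 2)) * hs2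
  have hp2 : ∑ i, p i * p i = (S * (m0 0 ^ 2 + m0 1 ^ 2 + m0 2 ^ 2) - E ^ 2) / S := by
    simp only [hp, Fin.sum_univ_three]
    rw [eq_div_iff hSne]
    field_simp
    ring
  have hvvw : ∑ i, p i * p i = ∑ i, q i * q i := by rw [hp2, hq2]
  have key : ∑ i, (mVec hv m0 (dot3 hv m0) μ t i) ^ 2
      = ∑ i, me i * me i + (a ^ 2 + b ^ 2) * ∑ i, p i * p i := by
    rw [show ∑ i, (mVec hv m0 (dot3 hv m0) μ t i) ^ 2
        = ∑ i, (me i + (a * p i - b * q i)) ^ 2 from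
      Finset.sum_congr rfl (fun i _ => by rw [hmv i])]
    exact quad3 me p q a b huv huw hvw hvvw
  have hab : a ^ 2 + b ^ 2 ≤ 1 := by
    have h1 : a ^ 2 + b ^ 2 = Complex.normSq z := by
      rw [Complex.normSq_apply]; ring
    have h2 : ‖z‖ ≤ 1 := by
      rw [hz, norm_pow]
      exact pow_le_one₀ (norm_nonneg _) (zfac_abs_le h μ hμ)
    rw [h1, ← Complex.sq_norm]
    nlinarith [norm_nonneg z]
  have hmm : ∑ i, me i * me i + ∑ i, p i * p i = norm3 m0 ^ 2 := by
    rw [norm3_sq]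
    simp only [hme, hp, Fin.sum_univ_three]
    field_simp
    ring
  have hm1 : norm3 m0 ^ 2 ≤ 1 := by
    have h0 : 0 ≤ norm3 m0 := Real.sqrt_nonneg _
    nlinarith
  have hpp : 0 ≤ ∑ i, p i * p i := Finset.sum_nonneg (fun i _ => mul_self_nonneg _)
  have hab0 : 0 ≤ a ^ 2 + b ^ 2 := by positivity
  have hsum : ∑ i, (mVec hv m0 (dot3 hv m0) μ t i) ^ 2 ≤ 1 := by
    rw [key]; nlinarith
  rw [norm3]
  calc Real.sqrt (∑ i, (mVec hv m0 (dot3 hv m0) μ t i) ^ 2) ≤ Real.sqrt 1 :=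
        Real.sqrt_le_sqrt hsum
    _ = 1 := Real.sqrt_one


/-- If `‖m⃗₀‖ ≤ 1` then for every `t`: `‖m⃗_t‖ ≤ 1`, the matrix
`ν_t = (𝟙 + m⃗_t·σ⃗)/2` is a density matrix whose eigenvalues are `(1 ± ‖m⃗_t‖)/2`,
and its von Neumann entropy equals `s(t)`. -/
theorem kac_entropy_formula
    (hv : Fin 3 → ℝ) (hhv : hv ≠ 0) (μ : ℝ) (hμ : μ ∈ Set.Icc (0 : ℝ) 1)
    (m0 : Fin 3 → ℝ) (hm0 : norm3 m0 ≤ 1) (t : ℕ) :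
    norm3 (mVec hv m0 (dot3 hv m0) μ t) ≤ 1 ∧
    (bloch (mVec hv m0 (dot3 hv m0) μ t)).PosSemidef ∧
    (bloch (mVec hv m0 (dot3 hv m0) μ t)).trace = 1 ∧
    spectrum ℂ (bloch (mVec hv m0 (dot3 hv m0) μ t)) =
      {(((1 + norm3 (mVec hv m0 (dot3 hv m0) μ t)) / 2 : ℝ) : ℂ),
       (((1 - norm3 (mVec hv m0 (dot3 hv m0) μ t)) / 2 : ℝ) : ℂ)} ∧
    vnEntropy (bloch (mVec hv m0 (dot3 hv m0) μ t)) =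
      entFun (norm3 (mVec hv m0 (dot3 hv m0) μ t)) := by
  exact ⟨mnorm_le hv hhv μ hμ m0 hm0 t,
    bloch_posSemidef _ (mnorm_le hv hhv μ hμ m0 hm0 t),
    bloch_trace _, bloch_spectrum _, bloch_entropy _⟩

end
end

section
/- (Equivalence of ensembles) Let μ ∈ [0,1], let k, N ∈ ℕ with 2k ≤ N, and let g : {0,1}^k → ℝ, regarded as a function of the first k coordinates of ε ∈ {0,1}^N. Then |E_μ^N(g) − E_μ(g)| ≤ (2^{2k+1} k / N) ‖g‖, where ‖g‖ := max_{ξ ∈ {0,1}^k} |g(ξ)|. -/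
open scoped BigOperators
open Matrix Filter
open scoped ComplexOrder

noncomputable section

/-- expectation of `g : {0,1}^k → ℝ` under the product Bernoulli(μ) measure. -/
def bernAvg (k : ℕ) (μ : ℝ) (g : (Fin k → Fin 2) → ℝ) : ℝ :=
  ∑ ξ : Fin k → Fin 2, (∏ i, if ξ i = 1 then μ else 1 - μ) * g ξ

lemma fin2_val : ∀ v : Fin 2, (v : ℕ) = if v = 1 then 1 else 0 := by decide

lemma sum_eq_card_filter {n : ℕ} (f : Fin n → Fin 2) :
    (∑ j, (f j : ℕ)) = (Finset.univ.filter (fun j => f j = 1)).card := by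
  rw [Finset.card_filter]
  exact Finset.sum_congr rfl fun j _ => fin2_val (f j)

lemma card_sum_eq (n m : ℕ) :
    (Finset.univ.filter (fun f : Fin n → Fin 2 => (∑ j, (f j : ℕ)) = m)).card
      = n.choose m := by
  have h01 : ∀ v : Fin 2, v = 0 ∨ v = 1 := by decide
  have key : (Finset.univ.filter (fun f : Fin n → Fin 2 => (∑ j, (f j : ℕ)) = m)).card
      = (Finset.powersetCard m (Finset.univ : Finset (Fin n))).card := by
    apply Finset.card_bij' (i := fun f _ => Finset.univ.filter (fun j => f j = 1))
      (j := fun s _ => fun j => if j ∈ s then 1 else 0)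
    case hi =>
      intro f hf
      rw [Finset.mem_powersetCard_univ, ← sum_eq_card_filter f]
      exact (Finset.mem_filter.mp hf).2
    case hj =>
      intro s hs
      rw [Finset.mem_filter]
      refine ⟨Finset.mem_univ _, ?_⟩
      rw [sum_eq_card_filter]
      rw [Finset.mem_powersetCard_univ] at hs
      rw [← hs]
      congr 1
      ext j
      simp only [Finset.mem_filter, Finset.mem_univ, true_and]
      split_ifs with h <;> simp [h]
    case left_inv =>
      intro f hf
      funext j
      rcases h01 (f j) with h | h <;>
        simp [Finset.mem_filter, h]
    case right_inv =>
      intro s hs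
      ext j
      simp only [Finset.mem_filter, Finset.mem_univ, true_and]
      split_ifs with h <;> simp [h]
  rw [key, Finset.card_powersetCard, Finset.card_univ, Fintype.card_fin]

lemma sum_split (N k : ℕ) (hk : k ≤ N) (v : Fin N → ℕ) :
    ∑ j, v j = (∑ i : Fin k, v (Fin.castLE hk i))
      + ∑ j : Fin (N - k), v ⟨k + j, by omega⟩ := by
  classical
  set F : ℕ → ℕ := fun i => if h : i < N then v ⟨i, h⟩ else 0 with hF
  have h1 : ∑ j, v j = ∑ i ∈ Finset.range N, F i := by
    rw [← Fin.sum_univ_eq_sum_range]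
    refine Finset.sum_congr rfl fun j _ => ?_
    simp [hF, j.isLt]
  have h2 : (∑ i : Fin k, v (Fin.castLE hk i)) = ∑ i ∈ Finset.range k, F i := by
    rw [← Fin.sum_univ_eq_sum_range]
    refine Finset.sum_congr rfl fun j _ => ?_
    have hj : (j : ℕ) < N := lt_of_lt_of_le j.isLt hk
    simp only [hF, dif_pos hj]
    rfl
  have h3 : (∑ j : Fin (N - k), v ⟨k + j, by omega⟩) = ∑ i ∈ Finset.Ico k N, F i := by
    rw [Finset.sum_Ico_eq_sum_range, ← Fin.sum_univ_eq_sum_range (fun i => F (k + i))]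
    refine Finset.sum_congr rfl fun j _ => ?_
    have hj : k + (j : ℕ) < N := by omega
    simp [hF, hj]
  rw [h1, h2, h3]
  simp only [Finset.range_eq_Ico]
  rw [Finset.sum_Ico_consecutive F (Nat.zero_le k) hk]

def glue (N k : ℕ) (hk : k ≤ N) (ξ : Fin k → Fin 2) (η : Fin (N - k) → Fin 2) :
    Fin N → Fin 2 :=
  fun idx => if h : (idx : ℕ) < k then ξ ⟨idx, h⟩ else η ⟨(idx : ℕ) - k, by omega⟩

lemma glue_left {N k : ℕ} (hk : k ≤ N) (ξ : Fin k → Fin 2) (η : Fin (N - k) → Fin 2)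
    (i : Fin k) : glue N k hk ξ η (Fin.castLE hk i) = ξ i := by
  have hi : ((Fin.castLE hk i : Fin N) : ℕ) < k := i.isLt
  rw [glue]
  rw [dif_pos hi]
  congr 1

lemma glue_right {N k : ℕ} (hk : k ≤ N) (ξ : Fin k → Fin 2) (η : Fin (N - k) → Fin 2)
    (j : Fin (N - k)) (h : k + (j : ℕ) < N) : glue N k hk ξ η ⟨k + (j : ℕ), h⟩ = η j := by
  rw [glue]
  rw [dif_neg (by simp only [Fin.val_mk]; omega)]
  congr 1
  exact Fin.ext (by simp only [Fin.val_mk]; omega)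

lemma card_prefix (N k M : ℕ) (hk : k ≤ N) (ξ : Fin k → Fin 2)
    (ha : (∑ i, (ξ i : ℕ)) ≤ M) :
    (Finset.univ.filter (fun ε : Fin N → Fin 2 =>
        (∑ j, (ε j : ℕ)) = M ∧ ∀ i : Fin k, ε (Fin.castLE hk i) = ξ i)).card
      = (Finset.univ.filter (fun η : Fin (N - k) → Fin 2 =>
          (∑ j, (η j : ℕ)) = M - (∑ i, (ξ i : ℕ)))).card := by
  classical
  set a := ∑ i, (ξ i : ℕ) with haa
  apply Finset.card_bij'
    (i := fun ε _ => fun j : Fin (N - k) => ε ⟨k + (j : ℕ), by omega⟩)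
    (j := fun η _ => glue N k hk ξ η)
  case hi =>
    intro ε hε
    simp only [Finset.mem_filter, Finset.mem_univ, true_and] at hε ⊢
    obtain ⟨hsum, hpre⟩ := hε
    have hs := sum_split N k hk (fun j => (ε j : ℕ))
    have hpres : (∑ i : Fin k, (ε (Fin.castLE hk i) : ℕ)) = a := by
      rw [haa]; exact Finset.sum_congr rfl fun i _ => by rw [hpre i]
    omega
  case hj =>
    intro η hη
    simp only [Finset.mem_filter, Finset.mem_univ, true_and] at hη ⊢
    constructor
    · have hs := sum_split N k hk (fun j => (glue N k hk ξ η j : ℕ))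
      have e1 : (∑ i : Fin k, (glue N k hk ξ η (Fin.castLE hk i) : ℕ)) = a := by
        rw [haa]
        exact Finset.sum_congr rfl fun i _ => by rw [glue_left]
      have e2 : (∑ j : Fin (N - k), (glue N k hk ξ η ⟨k + (j : ℕ), by omega⟩ : ℕ))
          = M - a := by
        rw [← hη]
        exact Finset.sum_congr rfl fun j _ => by rw [glue_right]
      omega
    · intro i
      exact glue_left hk ξ η i
  case left_inv =>
    intro ε hε
    simp only [Finset.mem_filter, Finset.mem_univ, true_and] at hε
    obtain ⟨hsum, hpre⟩ := hε
    funext idx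
    by_cases h : (idx : ℕ) < k
    · rw [glue, dif_pos h]
      have := hpre ⟨idx, h⟩
      rw [← this]
      congr 1
    · rw [glue, dif_neg h]
      congr 1
      exact Fin.ext (by simp; omega)
  case right_inv =>
    intro η hη
    funext j
    exact glue_right hk ξ η j (by omega)

lemma card_prefix_empty (N k M : ℕ) (hk : k ≤ N) (ξ : Fin k → Fin 2)
    (ha : M < ∑ i, (ξ i : ℕ)) :
    (Finset.univ.filter (fun ε : Fin N → Fin 2 =>
        (∑ j, (ε j : ℕ)) = M ∧ ∀ i : Fin k, ε (Fin.castLE hk i) = ξ i)).card = 0 := by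
  rw [Finset.card_eq_zero, Finset.filter_eq_empty_iff]
  rintro ε - ⟨hsum, hpre⟩
  have hs := sum_split N k hk (fun j => (ε j : ℕ))
  have hpres : (∑ i : Fin k, (ε (Fin.castLE hk i) : ℕ)) = ∑ i, (ξ i : ℕ) :=
    Finset.sum_congr rfl fun i _ => by rw [hpre i]
  omega

lemma cast_descFactorial (n b : ℕ) (h : b ≤ n) :
    ((n.descFactorial b : ℕ) : ℝ) = ∏ i ∈ Finset.range b, ((n : ℝ) - i) := by
  rw [Nat.descFactorial_eq_prod_range, Nat.cast_prod]
  refine Finset.prod_congr rfl fun i hi => ?_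
  rw [Finset.mem_range] at hi
  rw [Nat.cast_sub (by omega)]

lemma descFactorial_cast_eq (n b : ℕ) (h : b ≤ n) :
    ((n.descFactorial b : ℕ) : ℝ) = (n.factorial : ℝ) / ((n - b).factorial : ℝ) := by
  have := Nat.factorial_mul_descFactorial h
  have h2 : ((n - b).factorial : ℝ) * (n.descFactorial b : ℝ) = (n.factorial : ℝ) := by
    exact_mod_cast congrArg (fun x : ℕ => (x : ℝ)) this
  field_simp at h2 ⊢
  linarith

lemma choose_ratio (N k M a : ℕ) (hk : k ≤ N) (hM : M ≤ N) (haM : a ≤ M) (hak : a ≤ k)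
    (hrem : M - a ≤ N - k) :
    ((N - k).choose (M - a) : ℝ) / (N.choose M : ℝ)
      = ∏ i ∈ Finset.range k,
          ((if i < a then (M : ℝ) - i else ((N : ℝ) - M) - ((i : ℝ) - a)) / ((N : ℝ) - i)) := by
  have hka : k - a ≤ N - M := by omega
  -- rewrite RHS as product of descFactorials
  have hprod : (∏ i ∈ Finset.range k,
        ((if i < a then (M : ℝ) - i else ((N : ℝ) - M) - ((i : ℝ) - a)) / ((N : ℝ) - i)))
      = ((M.descFactorial a : ℕ) : ℝ) * (((N - M).descFactorial (k - a) : ℕ) : ℝ)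
        / ((N.descFactorial k : ℕ) : ℝ) := by
    rw [Finset.prod_div_distrib]
    congr 1
    · -- numerator
      have hsplit : (∏ i ∈ Finset.range k,
            (if i < a then (M : ℝ) - i else ((N : ℝ) - M) - ((i : ℝ) - a)))
          = (∏ i ∈ Finset.Ico 0 a,
              (if i < a then (M : ℝ) - i else ((N : ℝ) - M) - ((i : ℝ) - a)))
            * ∏ i ∈ Finset.Ico a k,
              (if i < a then (M : ℝ) - i else ((N : ℝ) - M) - ((i : ℝ) - a)) := by
        rw [Finset.prod_Ico_consecutive _ (Nat.zero_le a) hak, Finset.range_eq_Ico]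
      rw [hsplit]
      rw [cast_descFactorial M a haM, cast_descFactorial (N - M) (k - a) hka]
      congr 1
      · rw [Finset.range_eq_Ico]
        refine Finset.prod_congr rfl fun i hi => ?_
        rw [Finset.mem_Ico] at hi
        rw [if_pos hi.2]
      · rw [Finset.prod_Ico_eq_prod_range]
        refine Finset.prod_congr rfl fun i hi => ?_
        rw [Finset.mem_range] at hi
        rw [if_neg (by omega)]
        push_cast [Nat.cast_sub hM]
        ring
    · rw [cast_descFactorial N k hk]
  rw [hprod, descFactorial_cast_eq M a haM, descFactorial_cast_eq (N - M) (k - a) hka,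
    descFactorial_cast_eq N k hk, Nat.cast_choose ℝ hrem, Nat.cast_choose ℝ hM]
  have he : (N - k) - (M - a) = (N - M) - (k - a) := by omega
  rw [he]
  have f0 : ∀ m : ℕ, ((m.factorial : ℕ) : ℝ) ≠ 0 := fun m => by
    exact_mod_cast (Nat.factorial_pos m).ne'
  field_simp

lemma abs_prod_sub_prod (k : ℕ) (c b : ℕ → ℝ)
    (hc0 : ∀ i, i < k → 0 ≤ c i) (hc1 : ∀ i, i < k → c i ≤ 1)
    (hb0 : ∀ i, i < k → 0 ≤ b i) (hb1 : ∀ i, i < k → b i ≤ 1) :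
    |(∏ i ∈ Finset.range k, c i) - ∏ i ∈ Finset.range k, b i|
      ≤ ∑ i ∈ Finset.range k, |c i - b i| := by
  induction k with
  | zero => simp
  | succ n ih =>
    rw [Finset.prod_range_succ, Finset.prod_range_succ, Finset.sum_range_succ]
    have hPc0 : 0 ≤ ∏ i ∈ Finset.range n, c i :=
      Finset.prod_nonneg fun i hi => hc0 i (by simp at hi; omega)
    have hPc1 : (∏ i ∈ Finset.range n, c i) ≤ 1 :=
      Finset.prod_le_one (fun i hi => hc0 i (by simp at hi; omega))
        (fun i hi => hc1 i (by simp at hi; omega))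
    have hbn0 : 0 ≤ b n := hb0 n (by omega)
    have hbn1 : b n ≤ 1 := hb1 n (by omega)
    have ih' := ih (fun i hi => hc0 i (by omega)) (fun i hi => hc1 i (by omega))
      (fun i hi => hb0 i (by omega)) (fun i hi => hb1 i (by omega))
    set Pc := ∏ i ∈ Finset.range n, c i
    set Pb := ∏ i ∈ Finset.range n, b i
    have key : Pc * c n - Pb * b n = Pc * (c n - b n) + (Pc - Pb) * b n := by ring
    rw [key]
    calc |Pc * (c n - b n) + (Pc - Pb) * b n|
        ≤ |Pc * (c n - b n)| + |(Pc - Pb) * b n| := abs_add_le _ _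
      _ = |Pc| * |c n - b n| + |Pc - Pb| * |b n| := by rw [abs_mul, abs_mul]
      _ ≤ 1 * |c n - b n| + (∑ i ∈ Finset.range n, |c i - b i|) * 1 := by
          gcongr
          · rw [abs_of_nonneg hPc0]; exact hPc1
          · rw [abs_of_nonneg hbn0]; exact hbn1
      _ = (∑ i ∈ Finset.range n, |c i - b i|) + |c n - b n| := by ring

lemma pow_prod_eq (k a : ℕ) (μ : ℝ) (hak : a ≤ k) :
    μ ^ a * (1 - μ) ^ (k - a)
      = ∏ i ∈ Finset.range k, (if i < a then μ else 1 - μ) := by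
  have hsplit : (∏ i ∈ Finset.range k, (if i < a then μ else 1 - μ))
      = (∏ i ∈ Finset.Ico 0 a, (if i < a then μ else 1 - μ))
        * ∏ i ∈ Finset.Ico a k, (if i < a then μ else 1 - μ) := by
    rw [Finset.prod_Ico_consecutive _ (Nat.zero_le a) hak, Finset.range_eq_Ico]
  rw [hsplit]
  have h1 : (∏ i ∈ Finset.Ico 0 a, (if i < a then μ else 1 - μ)) = μ ^ a := by
    rw [Finset.prod_congr rfl (fun i hi => if_pos (Finset.mem_Ico.mp hi).2),
      Finset.prod_const, Nat.card_Ico, Nat.sub_zero]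
  have h2 : (∏ i ∈ Finset.Ico a k, (if i < a then μ else 1 - μ)) = (1 - μ) ^ (k - a) := by
    rw [Finset.prod_congr rfl (fun i hi => if_neg (by
        have := (Finset.mem_Ico.mp hi).1; omega)),
      Finset.prod_const, Nat.card_Ico]
  rw [h1, h2]

lemma div_sub_bound (u v d K Nr : ℝ) (hd : 0 < d) (hNr : 0 < Nr) (hdN : Nr ≤ 2 * d)
    (hnum : |u - v * d| ≤ K) : |u / d - v| ≤ 2 * K / Nr := by
  have heq : u / d - v = (u - v * d) / d := by field_simp
  rw [heq, abs_div, abs_of_pos hd, div_le_div_iff₀ hd hNr]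
  have hK : 0 ≤ K := le_trans (abs_nonneg _) hnum
  nlinarith [abs_nonneg (u - v * d)]

lemma per_factor (μ : ℝ) (hμ0 : 0 ≤ μ) (hμ1 : μ ≤ 1) (k N M a i : ℕ)
    (h2k : 2 * k ≤ N) (hi : i < k) (hak : a ≤ k)
    (hlo : μ * N ≤ (M : ℝ)) (hhi : (M : ℝ) ≤ μ * N + 1) :
    |(if i < a then (M : ℝ) - i else ((N : ℝ) - M) - ((i : ℝ) - a)) / ((N : ℝ) - i)
      - (if i < a then μ else 1 - μ)| ≤ 2 * k / N := by
  have hk1 : 1 ≤ k := by omega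
  have hNr : (0 : ℝ) < N := by exact_mod_cast (by omega : 0 < N)
  have hir : (i : ℝ) + 1 ≤ (k : ℝ) := by exact_mod_cast hi
  have hkr : 2 * (k : ℝ) ≤ (N : ℝ) := by exact_mod_cast h2k
  have hd : (0 : ℝ) < (N : ℝ) - i := by linarith
  have hdN : (N : ℝ) ≤ 2 * ((N : ℝ) - i) := by linarith
  by_cases h : i < a
  · rw [if_pos h, if_pos h]
    apply div_sub_bound _ _ _ _ _ hd hNr hdN
    have har : (i : ℝ) + 1 ≤ (a : ℝ) := by exact_mod_cast h
    have hi0 : (0 : ℝ) ≤ (i : ℝ) := Nat.cast_nonneg i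
    rw [abs_le]
    constructor <;> nlinarith
  · rw [if_neg h, if_neg h]
    apply div_sub_bound _ _ _ _ _ hd hNr hdN
    have har : (a : ℝ) ≤ (i : ℝ) := by exact_mod_cast (not_lt.mp h)
    have ha0 : (0 : ℝ) ≤ (a : ℝ) := Nat.cast_nonneg a
    have hi0 : (0 : ℝ) ≤ (i : ℝ) := Nat.cast_nonneg i
    rw [abs_le]
    constructor <;> nlinarith

lemma factor_nonneg (k N M a i : ℕ) (hk : k ≤ N) (hM : M ≤ N) (haM : a ≤ M)
    (hi : i < k) (hrem : M - a ≤ N - k) :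
    0 ≤ (if i < a then (M : ℝ) - i else ((N : ℝ) - M) - ((i : ℝ) - a)) / ((N : ℝ) - i) := by
  have hkr : (k : ℝ) ≤ (N : ℝ) := by exact_mod_cast hk
  have hir : (i : ℝ) + 1 ≤ (k : ℝ) := by exact_mod_cast hi
  have hd : (0 : ℝ) < (N : ℝ) - i := by linarith
  apply div_nonneg _ hd.le
  split_ifs with h
  · have har : (i : ℝ) + 1 ≤ (a : ℝ) := by exact_mod_cast h
    have haMr : (a : ℝ) ≤ (M : ℝ) := by exact_mod_cast haM
    linarith
  · have har : (a : ℝ) ≤ (i : ℝ) := by exact_mod_cast (not_lt.mp h)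
    have hremr : (M : ℝ) - a ≤ (N : ℝ) - k := by
      have h1 : ((M - a : ℕ) : ℝ) ≤ ((N - k : ℕ) : ℝ) := by exact_mod_cast hrem
      rw [Nat.cast_sub haM, Nat.cast_sub hk] at h1
      exact h1
    have haMr : (a : ℝ) ≤ (M : ℝ) := by exact_mod_cast haM
    linarith

lemma factor_le_one (k N M a i : ℕ) (hk : k ≤ N) (hM : M ≤ N) (haM : a ≤ M) (hi : i < k) :
    (if i < a then (M : ℝ) - i else ((N : ℝ) - M) - ((i : ℝ) - a)) / ((N : ℝ) - i) ≤ 1 := by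
  have hkr : (k : ℝ) ≤ (N : ℝ) := by exact_mod_cast hk
  have hir : (i : ℝ) + 1 ≤ (k : ℝ) := by exact_mod_cast hi
  have hd : (0 : ℝ) < (N : ℝ) - i := by linarith
  rw [div_le_one hd]
  have hMr : (M : ℝ) ≤ (N : ℝ) := by exact_mod_cast hM
  have haMr : (a : ℝ) ≤ (M : ℝ) := by exact_mod_cast haM
  split_ifs with h
  · linarith
  · have har : (a : ℝ) ≤ (i : ℝ) := by exact_mod_cast (not_lt.mp h)
    linarith

lemma key_estimate (μ : ℝ) (hμ0 : 0 ≤ μ) (hμ1 : μ ≤ 1) (k N M a : ℕ) (h2k : 2 * k ≤ N)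
    (hM : M ≤ N) (hak : a ≤ k) (hlo : μ * N ≤ (M : ℝ)) (hhi : (M : ℝ) ≤ μ * N + 1) :
    |(if a ≤ M then ((N - k).choose (M - a) : ℝ) else 0) / (N.choose M : ℝ)
       - μ ^ a * (1 - μ) ^ (k - a)| ≤ 2 * k ^ 2 / N := by
  have hk : k ≤ N := by omega
  have hw0 : 0 ≤ μ ^ a * (1 - μ) ^ (k - a) :=
    mul_nonneg (pow_nonneg hμ0 _) (pow_nonneg (by linarith) _)
  by_cases hvalid : a ≤ M ∧ M - a ≤ N - k
  · obtain ⟨haM, hrem⟩ := hvalid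
    rw [if_pos haM, choose_ratio N k M a hk hM haM hak hrem, pow_prod_eq k a μ hak]
    have hmain := abs_prod_sub_prod k
      (fun i => (if i < a then (M : ℝ) - i else ((N : ℝ) - M) - ((i : ℝ) - a)) / ((N : ℝ) - i))
      (fun i => if i < a then μ else 1 - μ)
      (fun i hi => factor_nonneg k N M a i hk hM haM hi hrem)
      (fun i hi => factor_le_one k N M a i hk hM haM hi)
      (fun i _ => by split_ifs <;> linarith)
      (fun i _ => by split_ifs <;> linarith)
    refine le_trans hmain (le_trans (Finset.sum_le_sum
      (fun i hi => per_factor μ hμ0 hμ1 k N M a i h2k (Finset.mem_range.mp hi) hak hlo hhi))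
      ?_)
    rw [Finset.sum_const, Finset.card_range, nsmul_eq_mul]
    exact le_of_eq (by ring)
  · -- invalid case: count is zero
    have hzero : (if a ≤ M then ((N - k).choose (M - a) : ℝ) else 0) = 0 := by
      by_cases haM : a ≤ M
      · rw [if_pos haM]
        have : N - k < M - a := by omega
        rw [Nat.choose_eq_zero_of_lt this]
        norm_num
      · rw [if_neg haM]
    rw [hzero, zero_div, zero_sub, abs_neg, abs_of_nonneg hw0]
    have hk1 : 1 ≤ k := by omega
    have hNr : (0 : ℝ) < N := by exact_mod_cast (by omega : 0 < N)
    have hkr1 : (1 : ℝ) ≤ (k : ℝ) := by exact_mod_cast hk1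
    have hkN : (k : ℝ) / N ≤ 2 * k ^ 2 / N := by
      gcongr
      nlinarith
    have hμ1' : (0 : ℝ) ≤ 1 - μ := by linarith
    by_cases haM : a ≤ M
    · -- then N - k < M - a ; bound via 1 - μ
      have hka1 : 1 ≤ k - a := by omega
      have hka2 : N - M + 1 ≤ k - a := by omega
      have hcast : ((N : ℝ) - M) + 1 ≤ (k : ℝ) - a := by
        have hc : ((N - M : ℕ) : ℝ) + 1 ≤ ((k - a : ℕ) : ℝ) := by exact_mod_cast hka2
        rw [Nat.cast_sub hM, Nat.cast_sub hak] at hc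
        exact hc
      have ha0 : (0 : ℝ) ≤ (a : ℝ) := Nat.cast_nonneg a
      have h1μ : 1 - μ ≤ (k : ℝ) / N := by
        rw [le_div_iff₀ hNr]
        nlinarith
      calc μ ^ a * (1 - μ) ^ (k - a)
          ≤ (1 - μ) ^ (k - a) :=
            mul_le_of_le_one_left (pow_nonneg hμ1' _) (pow_le_one₀ hμ0 hμ1)
        _ ≤ (1 - μ) ^ 1 := pow_le_pow_of_le_one hμ1' (by linarith) hka1
        _ = 1 - μ := pow_one _
        _ ≤ (k : ℝ) / N := h1μ
        _ ≤ 2 * k ^ 2 / N := hkN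
    · -- a > M ; bound via μ
      have ha1 : 1 ≤ a := by omega
      have haMr : (M : ℝ) + 1 ≤ (a : ℝ) := by exact_mod_cast (by omega : M + 1 ≤ a)
      have hakr : (a : ℝ) ≤ (k : ℝ) := by exact_mod_cast hak
      have hμk : μ ≤ (k : ℝ) / N := by
        rw [le_div_iff₀ hNr]
        nlinarith
      calc μ ^ a * (1 - μ) ^ (k - a)
          ≤ μ ^ a := mul_le_of_le_one_right (pow_nonneg hμ0 _) (pow_le_one₀ hμ1' (by linarith))
        _ ≤ μ ^ 1 := pow_le_pow_of_le_one hμ0 hμ1 ha1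
        _ = μ := pow_one _
        _ ≤ (k : ℝ) / N := hμk
        _ ≤ 2 * k ^ 2 / N := hkN

lemma weight_eq (k : ℕ) (μ : ℝ) (ξ : Fin k → Fin 2) :
    (∏ i, (if ξ i = 1 then μ else 1 - μ))
      = μ ^ (∑ i, (ξ i : ℕ)) * (1 - μ) ^ (k - (∑ i, (ξ i : ℕ))) := by
  classical
  rw [← Finset.prod_filter_mul_prod_filter_not Finset.univ (fun i => ξ i = 1)]
  have h1 : (∏ i ∈ Finset.univ.filter (fun i => ξ i = 1), (if ξ i = 1 then μ else 1 - μ))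
      = μ ^ (∑ i, (ξ i : ℕ)) := by
    rw [Finset.prod_congr rfl (fun i hi => if_pos (Finset.mem_filter.mp hi).2),
      Finset.prod_const, sum_eq_card_filter ξ]
  have h2 : (∏ i ∈ Finset.univ.filter (fun i => ¬ ξ i = 1), (if ξ i = 1 then μ else 1 - μ))
      = (1 - μ) ^ (k - (∑ i, (ξ i : ℕ))) := by
    rw [Finset.prod_congr rfl (fun i hi => if_neg (Finset.mem_filter.mp hi).2),
      Finset.prod_const]
    congr 1
    have := Finset.card_filter_add_card_filter_not (s := (Finset.univ : Finset (Fin k)))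
      (fun i => ξ i = 1)
    rw [Finset.card_univ, Fintype.card_fin] at this
    rw [sum_eq_card_filter ξ]
    omega
  rw [h1, h2]

lemma sum_le_k (k : ℕ) (ξ : Fin k → Fin 2) : (∑ i, (ξ i : ℕ)) ≤ k := by
  classical
  rw [sum_eq_card_filter ξ]
  calc (Finset.univ.filter (fun j => ξ j = 1)).card ≤ (Finset.univ : Finset (Fin k)).card :=
        Finset.card_filter_le _ _
    _ = k := by rw [Finset.card_univ, Fintype.card_fin]

/-- **equivalence of ensembles.** For `μ ∈ [0,1]`, `2k ≤ N` and
`g : {0,1}^k → ℝ` regarded as a function of the first `k` coordinates of `ε ∈ {0,1}^N`,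
`|E_μ^N(g) − E_μ(g)| ≤ (2^{2k+1} k / N) ‖g‖` where `‖g‖ = max_ξ |g(ξ)|`. -/
theorem kac_equivalence_of_ensembles
    (μ : ℝ) (hμ : μ ∈ Set.Icc (0 : ℝ) 1) (k N : ℕ) (h2k : 2 * k ≤ N)
    (g : (Fin k → Fin 2) → ℝ) :
    |epsAvg N μ (fun ε => g (fun i => ε (Fin.castLE (by omega) i))) - bernAvg k μ g| ≤
      2 ^ (2 * k + 1) * k / N *
        Finset.univ.sup' Finset.univ_nonempty (fun ξ => |g ξ|) := by
  classical
  obtain ⟨hμ0, hμ1⟩ := hμ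
  have hk : k ≤ N := by omega
  set M := Nat.ceil (μ * N) with hMdef
  set G := Finset.univ.sup' (Finset.univ_nonempty (α := Fin k → Fin 2)) (fun ξ => |g ξ|) with hG
  have hGle : ∀ ξ, |g ξ| ≤ G := fun ξ =>
    Finset.le_sup' (fun ξ => |g ξ|) (Finset.mem_univ ξ)
  have hG0 : 0 ≤ G := le_trans (abs_nonneg _) (hGle (fun _ => 0))
  have hN0 : (0 : ℝ) ≤ μ * N := mul_nonneg hμ0 (Nat.cast_nonneg N)
  have hMN : M ≤ N := Nat.ceil_le.mpr (by
    calc μ * N ≤ 1 * N := by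
          apply mul_le_mul_of_nonneg_right hμ1 (Nat.cast_nonneg N)
      _ = (N : ℝ) := one_mul _)
  have hlo : μ * N ≤ (M : ℝ) := Nat.le_ceil _
  have hhi : (M : ℝ) ≤ μ * N + 1 := (Nat.ceil_lt_add_one hN0).le
  have hcard : (OmegaSet N μ).card = N.choose M := card_sum_eq N M
  set res : (Fin N → Fin 2) → (Fin k → Fin 2) := fun ε => fun i => ε (Fin.castLE hk i)
    with hres
  set cnt : (Fin k → Fin 2) → ℕ := fun ξ => ((OmegaSet N μ).filter (fun ε => res ε = ξ)).card
    with hcnt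
  -- counting formula
  have hcnt_eq : ∀ ξ : Fin k → Fin 2, cnt ξ =
      if (∑ i, (ξ i : ℕ)) ≤ M then (N - k).choose (M - (∑ i, (ξ i : ℕ))) else 0 := by
    intro ξ
    have hset : (OmegaSet N μ).filter (fun ε => res ε = ξ)
        = Finset.univ.filter (fun ε : Fin N → Fin 2 =>
            (∑ j, (ε j : ℕ)) = M ∧ ∀ i : Fin k, ε (Fin.castLE hk i) = ξ i) := by
      rw [OmegaSet, Finset.filter_filter]
      refine Finset.filter_congr fun ε _ => ?_
      rw [hres]
      constructor
      · rintro ⟨h1, h2⟩; exact ⟨h1, fun i => congrFun h2 i⟩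
      · rintro ⟨h1, h2⟩; exact ⟨h1, funext h2⟩
    rw [hcnt]
    dsimp only
    rw [hset]
    by_cases ha : (∑ i, (ξ i : ℕ)) ≤ M
    · rw [if_pos ha, card_prefix N k M hk ξ ha, card_sum_eq]
    · rw [if_neg ha, card_prefix_empty N k M hk ξ (by omega)]
  -- fiberwise decomposition
  have hfiber : (∑ ε ∈ OmegaSet N μ, g (res ε)) = ∑ ξ : Fin k → Fin 2, (cnt ξ : ℝ) * g ξ := by
    rw [← Finset.sum_fiberwise (OmegaSet N μ) res (fun ε => g (res ε))]
    refine Finset.sum_congr rfl fun ξ _ => ?_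
    have hinner : (∑ ε ∈ (OmegaSet N μ).filter (fun ε => res ε = ξ), g (res ε))
        = ∑ ε ∈ (OmegaSet N μ).filter (fun ε => res ε = ξ), g ξ :=
      Finset.sum_congr rfl fun ε hε => by rw [(Finset.mem_filter.mp hε).2]
    rw [hinner, Finset.sum_const, nsmul_eq_mul, hcnt]
  have hdiff : epsAvg N μ (fun ε => g (fun i => ε (Fin.castLE (by omega) i))) - bernAvg k μ g
      = ∑ ξ : Fin k → Fin 2,
          ((cnt ξ : ℝ) / (N.choose M : ℝ) - ∏ i, (if ξ i = 1 then μ else 1 - μ)) * g ξ := by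
    rw [epsAvg, bernAvg, hcard]
    have : (∑ ε ∈ OmegaSet N μ, g (fun i => ε (Fin.castLE (by omega) i)))
        = ∑ ε ∈ OmegaSet N μ, g (res ε) := rfl
    rw [this, hfiber, Finset.sum_div, ← Finset.sum_sub_distrib]
    refine Finset.sum_congr rfl fun ξ _ => ?_
    ring
  rw [hdiff]
  -- bound each term
  have hterm : ∀ ξ : Fin k → Fin 2,
      |((cnt ξ : ℝ) / (N.choose M : ℝ) - ∏ i, (if ξ i = 1 then μ else 1 - μ)) * g ξ|
        ≤ (2 * k ^ 2 / N) * G := by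
    intro ξ
    rw [abs_mul]
    have h1 : |(cnt ξ : ℝ) / (N.choose M : ℝ) - ∏ i, (if ξ i = 1 then μ else 1 - μ)|
        ≤ 2 * k ^ 2 / N := by
      rw [weight_eq, hcnt_eq ξ]
      have hcast : ((if (∑ i, (ξ i : ℕ)) ≤ M then (N - k).choose (M - (∑ i, (ξ i : ℕ)))
          else 0 : ℕ) : ℝ)
          = if (∑ i, (ξ i : ℕ)) ≤ M then ((N - k).choose (M - (∑ i, (ξ i : ℕ))) : ℝ) else 0 := by
        split_ifs <;> simp
      rw [hcast]
      exact key_estimate μ hμ0 hμ1 k N M _ h2k hMN (sum_le_k k ξ) hlo hhi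
    exact mul_le_mul h1 (hGle ξ) (abs_nonneg _) (by positivity)
  calc |∑ ξ : Fin k → Fin 2,
        ((cnt ξ : ℝ) / (N.choose M : ℝ) - ∏ i, (if ξ i = 1 then μ else 1 - μ)) * g ξ|
      ≤ ∑ ξ : Fin k → Fin 2,
        |((cnt ξ : ℝ) / (N.choose M : ℝ) - ∏ i, (if ξ i = 1 then μ else 1 - μ)) * g ξ| :=
        Finset.abs_sum_le_sum_abs _ _
    _ ≤ ∑ _ξ : Fin k → Fin 2, (2 * k ^ 2 / N) * G := Finset.sum_le_sum fun ξ _ => hterm ξ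
    _ = 2 ^ k * ((2 * k ^ 2 / N) * G) := by
        rw [Finset.sum_const, Finset.card_univ, nsmul_eq_mul]
        congr 1
        simp
    _ ≤ 2 ^ (2 * k + 1) * k / N * G := by
        have hk2 : (k : ℝ) ≤ 2 ^ k := by exact_mod_cast (Nat.lt_two_pow_self (n := k)).le
        have hkn : (0 : ℝ) ≤ (k : ℝ) := Nat.cast_nonneg k
        have h2p : (0 : ℝ) ≤ (2 : ℝ) ^ k := by positivity
        have hNr : (0 : ℝ) ≤ (N : ℝ)⁻¹ := by positivity
        have hmain : (2 : ℝ) ^ k * (2 * k ^ 2) ≤ 2 ^ (2 * k + 1) * k := by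
          have hpow : (2 : ℝ) ^ (2 * k + 1) = 2 * ((2 : ℝ) ^ k) ^ 2 := by
            rw [pow_succ, two_mul, pow_add]
            ring
          rw [hpow]
          nlinarith [mul_nonneg (mul_nonneg h2p hkn) (sub_nonneg.mpr hk2)]
        calc (2 : ℝ) ^ k * ((2 * k ^ 2 / N) * G) = ((2 : ℝ) ^ k * (2 * k ^ 2)) * (N : ℝ)⁻¹ * G := by
              ring
          _ ≤ (2 ^ (2 * k + 1) * k) * (N : ℝ)⁻¹ * G := by
              apply mul_le_mul_of_nonneg_right _ hG0
              apply mul_le_mul_of_nonneg_right hmain hNr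
          _ = 2 ^ (2 * k + 1) * k / N * G := by ring

end
end

section
/- (Bloch-vector recursion) Let ν = (𝟙 + m⃗·σ⃗)/2 for m⃗ ∈ ℝ³. Then Γ*(ν) = (𝟙 + m⃗'·σ⃗)/2 with m⃗' = m⃗ − 2μ[(n⃗×m⃗) sin h cos h − n⃗×(n⃗×m⃗) sin² h], where n⃗ := h⃗/h. -/
open scoped BigOperators
open Matrix Filter
open scoped ComplexOrder

noncomputable section

/-- the Bloch-vector map `m⃗ ↦ m⃗' = m⃗ − 2μ[(n⃗×m⃗) sin h cos h − n⃗×(n⃗×m⃗) sin² h]`. -/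
def mprime (μ h : ℝ) (n m : Fin 3 → ℝ) : Fin 3 → ℝ := fun i =>
  m i - 2 * μ * ((crossProduct n m) i * Real.sin h * Real.cos h -
    (crossProduct n (crossProduct n m)) i * (Real.sin h) ^ 2)

open Nat in
lemma aux_exp_idem (P : Mat2) (hP : P * P = P) (c : ℂ) :
    NormedSpace.exp (c • P) = 1 + (Complex.exp c - 1) • P := by
  letI : SeminormedRing Mat2 := Matrix.linftyOpSemiNormedRing
  letI : NormedRing Mat2 := Matrix.linftyOpNormedRing
  letI : NormedAlgebra ℂ Mat2 := Matrix.linftyOpNormedAlgebra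
  have hPn : ∀ k : ℕ, P ^ (k + 1) = P := by
    intro k; induction k with
    | zero => simp
    | succ k ih => rw [pow_succ, ih, hP]
  have hsum : Summable (fun n : ℕ => ((n ! : ℂ))⁻¹ • (c • P) ^ n) :=
    NormedSpace.expSeries_summable' (𝕂 := ℂ) (c • P)
  have hsumc : Summable (fun n : ℕ => ((n ! : ℂ))⁻¹ * c ^ n) := by
    simpa [smul_eq_mul] using NormedSpace.expSeries_summable' (𝕂 := ℂ) c
  have hexpc : Complex.exp c = 1 + ∑' k : ℕ, (((k + 1)! : ℂ))⁻¹ * c ^ (k + 1) := by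
    rw [Complex.exp_eq_exp_ℂ,
      show NormedSpace.exp c = ∑' n : ℕ, ((n ! : ℂ))⁻¹ • c ^ n from
        congrFun (NormedSpace.exp_eq_tsum ℂ) c,
      Summable.tsum_eq_zero_add (by simpa [smul_eq_mul] using hsumc)]
    simp only [smul_eq_mul]
    simp
  rw [show NormedSpace.exp (c • P) = ∑' n : ℕ, ((n ! : ℂ))⁻¹ • (c • P) ^ n from
      congrFun (NormedSpace.exp_eq_tsum ℂ) _, Summable.tsum_eq_zero_add hsum]
  have hterm : ∀ k : ℕ, (((k + 1)! : ℂ))⁻¹ • (c • P) ^ (k + 1)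
      = ((((k + 1)! : ℂ))⁻¹ * c ^ (k + 1)) • P := by
    intro k
    rw [smul_pow, hPn, smul_smul]
  simp only [hterm]
  rw [Summable.tsum_smul_const]
  · rw [hexpc]; simp [add_sub_cancel_left]
  · have := (summable_nat_add_iff 1).2 hsumc
    simpa using this

lemma aux_dotPauli_mul (a b : Fin 3 → ℝ) :
    dotPauli a * dotPauli b =
      (dot3 a b : ℂ) • 1 + Complex.I • dotPauli (crossProduct a b) := by
  ext i j
  fin_cases i <;> fin_cases j
  · simp [dotPauli, pauli, σx, σy, σz, dot3, cross_apply, Fin.sum_univ_three,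
      Matrix.mul_apply, Fin.sum_univ_two, Matrix.one_apply]
    push_cast
    linear_combination (-(a 1 : ℂ) * (b 1 : ℂ)) * Complex.I_sq
  · simp [dotPauli, pauli, σx, σy, σz, dot3, cross_apply, Fin.sum_univ_three,
      Matrix.mul_apply, Fin.sum_univ_two, Matrix.one_apply]
    push_cast
    linear_combination ((a 2 : ℂ) * (b 0 : ℂ) - (a 0 : ℂ) * (b 2 : ℂ)) * Complex.I_sq
  · simp [dotPauli, pauli, σx, σy, σz, dot3, cross_apply, Fin.sum_univ_three,
      Matrix.mul_apply, Fin.sum_univ_two, Matrix.one_apply]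
    push_cast
    linear_combination ((a 0 : ℂ) * (b 2 : ℂ) - (a 2 : ℂ) * (b 0 : ℂ)) * Complex.I_sq
  · simp [dotPauli, pauli, σx, σy, σz, dot3, cross_apply, Fin.sum_univ_three,
      Matrix.mul_apply, Fin.sum_univ_two, Matrix.one_apply]
    push_cast
    linear_combination (-(a 1 : ℂ) * (b 1 : ℂ)) * Complex.I_sq

lemma aux_exp_invol (N : Mat2) (hN : N * N = 1) (z : ℂ) :
    NormedSpace.exp (z • N) =
      1 + (Complex.exp z - 1) • ((2 : ℂ)⁻¹ • (1 + N))
        + (Complex.exp (-z) - 1) • ((2 : ℂ)⁻¹ • (1 - N)) := by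
  set P : Mat2 := (2 : ℂ)⁻¹ • (1 + N) with hPdef
  set Q : Mat2 := (2 : ℂ)⁻¹ • (1 - N) with hQdef
  have e1 : (1 + N) * (1 + N) = 1 + N + N + N * N := by noncomm_ring
  have e2 : (1 - N) * (1 - N) = 1 - N - N + N * N := by noncomm_ring
  have e3 : (1 + N) * (1 - N) = 1 - N * N := by noncomm_ring
  have e4 : (1 - N) * (1 + N) = 1 - N * N := by noncomm_ring
  have hP : P * P = P := by
    rw [hPdef, smul_mul_smul_comm, e1, hN]; module
  have hQ : Q * Q = Q := by
    rw [hQdef, smul_mul_smul_comm, e2, hN]; module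
  have hPQ : P * Q = 0 := by
    rw [hPdef, hQdef, smul_mul_smul_comm, e3, hN]; simp
  have hQP : Q * P = 0 := by
    rw [hQdef, hPdef, smul_mul_smul_comm, e4, hN]; simp
  have hcomm : Commute (z • P) ((-z) • Q) := by
    have l : (z • P) * ((-z) • Q) = (z * (-z)) • (P * Q) := smul_mul_smul_comm z P (-z) Q
    have r : ((-z) • Q) * (z • P) = ((-z) * z) • (Q * P) := smul_mul_smul_comm (-z) Q z P
    unfold Commute SemiconjBy
    rw [l, r, hPQ, hQP, smul_zero, smul_zero]
  have hsplit : z • N = z • P + (-z) • Q := by rw [hPdef, hQdef]; module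
  rw [hsplit, Matrix.exp_add_of_commute _ _ hcomm, aux_exp_idem P hP z,
    aux_exp_idem Q hQ (-z)]
  have hfin : (1 + (Complex.exp z - 1) • P) * (1 + (Complex.exp (-z) - 1) • Q)
      = 1 + (Complex.exp z - 1) • P + (Complex.exp (-z) - 1) • Q
        + ((Complex.exp z - 1) * (Complex.exp (-z) - 1)) • (P * Q) := by
    simp only [mul_add, add_mul, one_mul, mul_one, smul_mul_smul_comm]
    abel
  rw [hfin, hPQ, smul_zero, add_zero]

lemma aux_Umat_eq (hv : Fin 3 → ℝ) (hhv : hv ≠ 0) :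
    Umat hv = (Real.cos (norm3 hv) : ℂ) • 1 +
      ((Real.sin (norm3 hv) : ℂ) * Complex.I) • dotPauli (fun i => hv i / norm3 hv) := by
  have h2 : 0 < ∑ i, hv i ^ 2 := by
    obtain ⟨i, hi⟩ := Function.ne_iff.mp hhv
    exact Finset.sum_pos' (fun j _ => sq_nonneg _) ⟨i, Finset.mem_univ i, sq_pos_of_ne_zero hi⟩
  have hh : 0 < norm3 hv := Real.sqrt_pos.mpr h2
  have hsq : norm3 hv ^ 2 = ∑ i, hv i ^ 2 := Real.sq_sqrt h2.le
  have hhC : ((norm3 hv : ℝ) : ℂ) ≠ 0 := by exact_mod_cast hh.ne'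
  have hnn : dot3 (fun i => hv i / norm3 hv) (fun i => hv i / norm3 hv) = 1 := by
    unfold dot3
    rw [Finset.sum_congr rfl
      (fun i _ => show hv i / norm3 hv * (hv i / norm3 hv) = hv i ^ 2 / norm3 hv ^ 2 by
        rw [div_mul_div_comm, sq, sq]),
      ← Finset.sum_div, ← hsq, div_self (pow_ne_zero 2 hh.ne')]
  have hNN : dotPauli (fun i => hv i / norm3 hv) * dotPauli (fun i => hv i / norm3 hv) = 1 := by
    rw [aux_dotPauli_mul, hnn, cross_self]
    simp [dotPauli]
  have hscale : Complex.I • Hmat hv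
      = (Complex.I * (norm3 hv : ℝ)) • dotPauli (fun i => hv i / norm3 hv) := by
    unfold Hmat dotPauli
    rw [Finset.smul_sum, Finset.smul_sum]
    refine Finset.sum_congr rfl fun i _ => ?_
    rw [smul_smul, smul_smul]
    congr 1
    push_cast
    field_simp
  have hE1 : Complex.exp (Complex.I * (norm3 hv : ℝ))
      = (Real.cos (norm3 hv) : ℂ) + (Real.sin (norm3 hv) : ℂ) * Complex.I := by
    rw [mul_comm, Complex.exp_mul_I, ← Complex.ofReal_cos, ← Complex.ofReal_sin]
  have hE2 : Complex.exp (-(Complex.I * (norm3 hv : ℝ)))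
      = (Real.cos (norm3 hv) : ℂ) - (Real.sin (norm3 hv) : ℂ) * Complex.I := by
    rw [show -(Complex.I * ((norm3 hv : ℝ) : ℂ)) = ((-(norm3 hv) : ℝ) : ℂ) * Complex.I by
        push_cast; ring,
      Complex.exp_mul_I, ← Complex.ofReal_cos, ← Complex.ofReal_sin, Real.cos_neg,
      Real.sin_neg]
    push_cast
    ring
  rw [Umat, hscale, aux_exp_invol _ hNN, hE1, hE2]
  module

lemma aux_key (μ c s : ℝ) (n m : Fin 3 → ℝ)
    (hn : n 0 ^ 2 + n 1 ^ 2 + n 2 ^ 2 = 1) (hcs : c ^ 2 + s ^ 2 = 1) :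
    GamS ((c : ℂ) • 1 + ((s : ℂ) * Complex.I) • dotPauli n) μ (bloch m) =
      bloch (fun i => m i - 2 * μ * ((crossProduct n m) i * s * c -
        (crossProduct n (crossProduct n m)) i * s ^ 2)) := by
  have hnC : (n 0 : ℂ) ^ 2 + (n 1 : ℂ) ^ 2 + (n 2 : ℂ) ^ 2 = 1 := by exact_mod_cast hn
  have hcsC : (c : ℂ) ^ 2 + (s : ℂ) ^ 2 = 1 := by exact_mod_cast hcs
  have hI : Complex.I ^ 2 = -1 := Complex.I_sq
  ext i j
  fin_cases i <;> fin_cases j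
  · simp [GamS, bloch, dotPauli, pauli, σx, σy, σz, cross_apply, Matrix.mul_apply,
        Fin.sum_univ_two, Fin.sum_univ_three, Matrix.one_apply, Matrix.smul_apply,
        Matrix.add_apply, Complex.real_smul, Matrix.conjTranspose_apply, Complex.star_def,
        _root_.map_add, _root_.map_mul, _root_.map_sub, Complex.conj_ofReal, Complex.conj_I]
    push_cast
    linear_combination ((-1/2)*(s:ℂ)^2*(μ:ℂ)*(n 2:ℂ)^2 + (-1/2)*(s:ℂ)^2*(μ:ℂ)*(n 2:ℂ)^2*(m 2:ℂ) + (-1)*(s:ℂ)^2*(μ:ℂ)*(n 1:ℂ)*(n 2:ℂ)*(m 1:ℂ) + (-1/2)*(s:ℂ)^2*(μ:ℂ)*(n 1:ℂ)^2 + (1/2)*(s:ℂ)^2*(μ:ℂ)*(n 1:ℂ)^2*(m 2:ℂ) + (-1)*(s:ℂ)^2*(μ:ℂ)*(n 0:ℂ)*(n 2:ℂ)*(m 0:ℂ) + (-1/2)*(s:ℂ)^2*(μ:ℂ)*(n 0:ℂ)^2 + (1/2)*(s:ℂ)^2*(μ:ℂ)*(n 0:ℂ)^2*(m 2:ℂ)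 + (-1)*(c:ℂ)*(s:ℂ)*(μ:ℂ)*(n 1:ℂ)*(m 0:ℂ) + (c:ℂ)*(s:ℂ)*(μ:ℂ)*(n 0:ℂ)*(m 1:ℂ) + Complex.I^2*(s:ℂ)^2*(μ:ℂ)*(n 1:ℂ)*(n 2:ℂ)*(m 1:ℂ) + (1/2)*Complex.I^2*(s:ℂ)^2*(μ:ℂ)*(n 1:ℂ)^2 + (-1/2)*Complex.I^2*(s:ℂ)^2*(μ:ℂ)*(n 1:ℂ)^2*(m 2:ℂ)) * hI + ((1/2)*(s:ℂ)^2*(μ:ℂ) + (1/2)*(s:ℂ)^2*(μ:ℂ)*(m 2:ℂ)) * hnC + ((1/2)*(μ:ℂ) + (1/2)*(μ:ℂ)*(m 2:ℂ)) * hcsC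
  · simp [GamS, bloch, dotPauli, pauli, σx, σy, σz, cross_apply, Matrix.mul_apply,
        Fin.sum_univ_two, Fin.sum_univ_three, Matrix.one_apply, Matrix.smul_apply,
        Matrix.add_apply, Complex.real_smul, Matrix.conjTranspose_apply, Complex.star_def,
        _root_.map_add, _root_.map_mul, _root_.map_sub, Complex.conj_ofReal, Complex.conj_I]
    push_cast
    linear_combination ((1/2)*(s:ℂ)^2*(μ:ℂ)*(n 2:ℂ)^2*(m 0:ℂ) + (1/2)*(s:ℂ)^2*(μ:ℂ)*(n 1:ℂ)^2*(m 0:ℂ) + (-1)*(s:ℂ)^2*(μ:ℂ)*(n 0:ℂ)*(n 2:ℂ)*(m 2:ℂ) + (-1)*(s:ℂ)^2*(μ:ℂ)*(n 0:ℂ)*(n 1:ℂ)*(m 1:ℂ) + (-1/2)*(s:ℂ)^2*(μ:ℂ)*(n 0:ℂ)^2*(m 0:ℂ) + (-1)*(c:ℂ)*(s:ℂ)*(μ:ℂ)*(n 2:ℂ)*(m 1:ℂ) + (c:ℂ)*(s:ℂ)*(μ:ℂ)*(n 1:ℂ)*(m 2:ℂ) + (-1/2)*Complex.I*(s:ℂ)^2*(μ:ℂ)*(n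 2:ℂ)^2*(m 1:ℂ) + Complex.I*(s:ℂ)^2*(μ:ℂ)*(n 1:ℂ)*(n 2:ℂ)*(m 2:ℂ) + (1/2)*Complex.I*(s:ℂ)^2*(μ:ℂ)*(n 1:ℂ)^2*(m 1:ℂ) + Complex.I*(s:ℂ)^2*(μ:ℂ)*(n 0:ℂ)*(n 1:ℂ)*(m 0:ℂ) + (-1/2)*Complex.I*(s:ℂ)^2*(μ:ℂ)*(n 0:ℂ)^2*(m 1:ℂ) + (-1/2)*Complex.I^2*(s:ℂ)^2*(μ:ℂ)*(n 1:ℂ)^2*(m 0:ℂ) + Complex.I^2*(s:ℂ)^2*(μ:ℂ)*(n 0:ℂ)*(n 1:ℂ)*(m 1:ℂ) + (-1/2)*Complex.I^3*(s:ℂ)^2*(μ:ℂ)*(n 1:ℂ)^2*(m 1:ℂ)) * hI + ((1/2)*(s:ℂ)^2*(μ:ℂ)*(m 0:ℂ) + (-1/2)*Complex.I*(s:ℂ)^2*(μ:ℂ)*(m 1:ℂ)) * hnC + ((1/2)*(μ:ℂ)*(m 0:ℂ) + (-1/2)*Complex.I*(μ:ℂ)*(m 1:ℂ)) * hcsC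
  · simp [GamS, bloch, dotPauli, pauli, σx, σy, σz, cross_apply, Matrix.mul_apply,
        Fin.sum_univ_two, Fin.sum_univ_three, Matrix.one_apply, Matrix.smul_apply,
        Matrix.add_apply, Complex.real_smul, Matrix.conjTranspose_apply, Complex.star_def,
        _root_.map_add, _root_.map_mul, _root_.map_sub, Complex.conj_ofReal, Complex.conj_I]
    push_cast
    linear_combination ((1/2)*(s:ℂ)^2*(μ:ℂ)*(n 2:ℂ)^2*(m 0:ℂ) + (1/2)*(s:ℂ)^2*(μ:ℂ)*(n 1:ℂ)^2*(m 0:ℂ) + (-1)*(s:ℂ)^2*(μ:ℂ)*(n 0:ℂ)*(n 2:ℂ)*(m 2:ℂ) + (-1)*(s:ℂ)^2*(μ:ℂ)*(n 0:ℂ)*(n 1:ℂ)*(m 1:ℂ) + (-1/2)*(s:ℂ)^2*(μ:ℂ)*(n 0:ℂ)^2*(m 0:ℂ) + (-1)*(c:ℂ)*(s:ℂ)*(μ:ℂ)*(n 2:ℂ)*(m 1:ℂ) + (c:ℂ)*(s:ℂ)*(μ:ℂ)*(n 1:ℂ)*(m 2:ℂ) + (1/2)*Complex.I*(s:ℂ)^2*(μ:ℂ)*(n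 2:ℂ)^2*(m 1:ℂ) + (-1)*Complex.I*(s:ℂ)^2*(μ:ℂ)*(n 1:ℂ)*(n 2:ℂ)*(m 2:ℂ) + (-1/2)*Complex.I*(s:ℂ)^2*(μ:ℂ)*(n 1:ℂ)^2*(m 1:ℂ) + (-1)*Complex.I*(s:ℂ)^2*(μ:ℂ)*(n 0:ℂ)*(n 1:ℂ)*(m 0:ℂ) + (1/2)*Complex.I*(s:ℂ)^2*(μ:ℂ)*(n 0:ℂ)^2*(m 1:ℂ) + (-1/2)*Complex.I^2*(s:ℂ)^2*(μ:ℂ)*(n 1:ℂ)^2*(m 0:ℂ) + Complex.I^2*(s:ℂ)^2*(μ:ℂ)*(n 0:ℂ)*(n 1:ℂ)*(m 1:ℂ) + (1/2)*Complex.I^3*(s:ℂ)^2*(μ:ℂ)*(n 1:ℂ)^2*(m 1:ℂ)) * hI + ((1/2)*(s:ℂ)^2*(μ:ℂ)*(m 0:ℂ) + (1/2)*Complex.I*(s:ℂ)^2*(μ:ℂ)*(m 1:ℂ)) * hnC + ((1/2)*(μ:ℂ)*(m 0:ℂ) + (1/2)*Complex.I*(μ:ℂ)*(m 1:ℂ))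 * hcsC
  · simp [GamS, bloch, dotPauli, pauli, σx, σy, σz, cross_apply, Matrix.mul_apply,
        Fin.sum_univ_two, Fin.sum_univ_three, Matrix.one_apply, Matrix.smul_apply,
        Matrix.add_apply, Complex.real_smul, Matrix.conjTranspose_apply, Complex.star_def,
        _root_.map_add, _root_.map_mul, _root_.map_sub, Complex.conj_ofReal, Complex.conj_I]
    push_cast
    linear_combination ((-1/2)*(s:ℂ)^2*(μ:ℂ)*(n 2:ℂ)^2 + (1/2)*(s:ℂ)^2*(μ:ℂ)*(n 2:ℂ)^2*(m 2:ℂ) + (s:ℂ)^2*(μ:ℂ)*(n 1:ℂ)*(n 2:ℂ)*(m 1:ℂ) + (-1/2)*(s:ℂ)^2*(μ:ℂ)*(n 1:ℂ)^2 + (-1/2)*(s:ℂ)^2*(μ:ℂ)*(n 1:ℂ)^2*(m 2:ℂ) + (s:ℂ)^2*(μ:ℂ)*(n 0:ℂ)*(n 2:ℂ)*(m 0:ℂ) + (-1/2)*(s:ℂ)^2*(μ:ℂ)*(n 0:ℂ)^2 + (-1/2)*(s:ℂ)^2*(μ:ℂ)*(n 0:ℂ)^2*(m 2:ℂ) + (c:ℂ)*(s:ℂ)*(μ:ℂ)*(n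 1:ℂ)*(m 0:ℂ) + (-1)*(c:ℂ)*(s:ℂ)*(μ:ℂ)*(n 0:ℂ)*(m 1:ℂ) + (-1)*Complex.I^2*(s:ℂ)^2*(μ:ℂ)*(n 1:ℂ)*(n 2:ℂ)*(m 1:ℂ) + (1/2)*Complex.I^2*(s:ℂ)^2*(μ:ℂ)*(n 1:ℂ)^2 + (1/2)*Complex.I^2*(s:ℂ)^2*(μ:ℂ)*(n 1:ℂ)^2*(m 2:ℂ)) * hI + ((1/2)*(s:ℂ)^2*(μ:ℂ) + (-1/2)*(s:ℂ)^2*(μ:ℂ)*(m 2:ℂ)) * hnC + ((1/2)*(μ:ℂ) + (-1/2)*(μ:ℂ)*(m 2:ℂ)) * hcsC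

/-- **Bloch-vector recursion.** If `ν = (𝟙 + m⃗·σ⃗)/2` then
`Γ*(ν) = (𝟙 + m⃗'·σ⃗)/2` with
`m⃗' = m⃗ − 2μ[(n⃗×m⃗) sin h cos h − n⃗×(n⃗×m⃗) sin² h]` and `n⃗ = h⃗/h`. -/
theorem kac_bloch_recursion
    (hv : Fin 3 → ℝ) (hhv : hv ≠ 0) (μ : ℝ) (hμ : μ ∈ Set.Icc (0 : ℝ) 1)
    (m : Fin 3 → ℝ) :
    GamS (Umat hv) μ (bloch m) =
      bloch (mprime μ (norm3 hv) (fun i => hv i / norm3 hv) m) := by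
  have h2 : 0 < ∑ i, hv i ^ 2 := by
    obtain ⟨i, hi⟩ := Function.ne_iff.mp hhv
    exact Finset.sum_pos' (fun j _ => sq_nonneg _) ⟨i, Finset.mem_univ i, sq_pos_of_ne_zero hi⟩
  have hh : 0 < norm3 hv := Real.sqrt_pos.mpr h2
  have hsq : norm3 hv ^ 2 = ∑ i, hv i ^ 2 := Real.sq_sqrt h2.le
  have hn : (hv 0 / norm3 hv) ^ 2 + (hv 1 / norm3 hv) ^ 2 + (hv 2 / norm3 hv) ^ 2 = 1 := by
    have hsq3 : norm3 hv ^ 2 = hv 0 ^ 2 + hv 1 ^ 2 + hv 2 ^ 2 := by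
      rw [hsq, Fin.sum_univ_three]
    field_simp
    linarith [hsq3]
  rw [aux_Umat_eq hv hhv]
  unfold mprime
  simpa using aux_key μ (Real.cos (norm3 hv)) (Real.sin (norm3 hv))
    (fun i => hv i / norm3 hv) m hn (Real.cos_sq_add_sin_sq _)

end
end
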